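/- Let n be an odd prime, M = circ(m₀,...,m_{n−1}) with m_j = (1/√n)·e^{(2πi/n)·j²}, and for 0 < s < n write M^s = circ(x₀,...,x_{n−1}). Then |x₀|² ≤ 1/n, and M^n = circ(y₀,0,...,0) with |y₀|² = 1. -/

import Mathlib

open Complex Real Matrix

/-- The circulant (shift) matrix whose `(i,j)` entry is `a (j - i)`. -/
def circ {n : ℕ} (a : ZMod n → ℂ) : Matrix (ZMod n) (ZMod n) ℂ :=
  fun i j => a (j - i)

/-- The circulant Gauss matrix `M_n` with `m_j = (1/√n)·e^{(2πi/n)·j²}`. -/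
noncomputable def gaussMatrix (n : ℕ) : Matrix (ZMod n) (ZMod n) ℂ :=
  circ (fun j => (1 / Real.sqrt n : ℂ) *
    Complex.exp (2 * Real.pi * Complex.I * ((j.val : ℂ) ^ 2) / n))

noncomputable def zet (n : ℕ) : ℂ := Complex.exp (2 * Real.pi * Complex.I / n)
noncomputable def ee (n : ℕ) (k : ZMod n) : ℂ := zet n ^ k.val

lemma zet_pow_n (n : ℕ) (hn : n ≠ 0) : zet n ^ n = 1 := by
  have := Complex.isPrimitiveRoot_exp n hn
  exact this.pow_eq_one

lemma zet_pow_mod (n : ℕ) (hn : n ≠ 0) (m : ℕ) : zet n ^ m = zet n ^ (m % n) := by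
  conv_lhs => rw [← Nat.mod_add_div m n]
  rw [pow_add, pow_mul, zet_pow_n n hn, one_pow, mul_one]

lemma ee_add (n : ℕ) [NeZero n] (a b : ZMod n) : ee n (a + b) = ee n a * ee n b := by
  have hn : n ≠ 0 := NeZero.ne n
  rw [ee, ee, ee, ZMod.val_add, ← zet_pow_mod n hn, pow_add]

lemma ee_zero (n : ℕ) : ee n 0 = 1 := by
  simp [ee]

lemma abs_ee (n : ℕ) (k : ZMod n) : ‖ee n k‖ = 1 := by
  rw [ee, norm_pow, zet]
  have : 2 * (π:ℂ) * Complex.I / n = ((2 * π / n : ℝ) : ℂ) * Complex.I := by push_cast; ring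
  rw [this, Complex.norm_exp_ofReal_mul_I, one_pow]

lemma ee_ne_zero (n : ℕ) (k : ZMod n) : ee n k ≠ 0 := by
  intro h; have := abs_ee n k; rw [h] at this; simp at this

lemma conj_ee (n : ℕ) [NeZero n] (k : ZMod n) : (starRingEnd ℂ) (ee n k) = ee n (-k) := by
  have h1 : ee n k * (starRingEnd ℂ) (ee n k) = 1 := by
    rw [Complex.mul_conj]
    norm_cast
    rw [← Complex.sq_norm, abs_ee]; norm_num
  have h2 : ee n k * ee n (-k) = 1 := by
    rw [← ee_add, add_neg_cancel, ee_zero]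
  exact mul_left_cancel₀ (ee_ne_zero n k) (h1.trans h2.symm)

lemma ee_one_ne_one (n : ℕ) (hn : 1 < n) : ee n 1 ≠ 1 := by
  have h0 : n ≠ 0 := by omega
  have hprim := Complex.isPrimitiveRoot_exp n h0
  haveI : Fact (1 < n) := ⟨hn⟩
  rw [ee, ZMod.val_one]
  intro h
  rw [pow_one] at h
  have := hprim.pow_eq_one_iff_dvd 1
  rw [pow_one] at this
  have hd := Nat.le_of_dvd one_pos (this.mp h)
  omega

lemma sum_ee (n : ℕ) [NeZero n] (hn : 1 < n) : ∑ j : ZMod n, ee n j = 0 := by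
  have key : ∑ j : ZMod n, ee n (j + 1) = ∑ j : ZMod n, ee n j :=
    Fintype.sum_equiv (Equiv.addRight 1) _ _ (fun j => rfl)
  simp_rw [ee_add] at key
  rw [← Finset.sum_mul] at key
  have : (∑ j : ZMod n, ee n j) * (ee n 1 - 1) = 0 := by
    rw [mul_sub, key]; ring
  rcases mul_eq_zero.mp this with h | h
  · exact h
  · exact absurd (by linear_combination h) (ee_one_ne_one n hn)

lemma sum_ee_mul (n : ℕ) [NeZero n] [Fact n.Prime] (hn : 1 < n) (u : ZMod n) (hu : u ≠ 0) :
    ∑ j : ZMod n, ee n (u * j) = 0 := by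
  have : ∑ j : ZMod n, ee n (u * j) = ∑ j : ZMod n, ee n j := by
    exact Fintype.sum_equiv (Equiv.mulLeft₀ u hu) _ _ (fun j => rfl)
  rw [this, sum_ee n hn]

lemma circ_mul {n : ℕ} [NeZero n] (a b : ZMod n → ℂ) :
    circ a * circ b = circ (fun t => ∑ j, a j * b (t - j)) := by
  ext i k
  simp only [Matrix.mul_apply, circ]
  refine Fintype.sum_equiv (Equiv.subRight i) _ _ (fun j => ?_)
  simp only [Equiv.subRight_apply]
  congr 1
  ring_nf

lemma gaussMatrix_eq (n : ℕ) [NeZero n] :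
    gaussMatrix n = circ (fun j => (1 / Real.sqrt n : ℂ) * ee n (j ^ 2)) := by
  have hn : n ≠ 0 := NeZero.ne n
  ext i k
  show (1 / Real.sqrt n : ℂ) * _ = (1 / Real.sqrt n : ℂ) * _
  congr 1
  set j := k - i
  show _ = zet n ^ (j^2).val
  rw [sq j, ZMod.val_mul, ← zet_pow_mod n hn, ← sq, zet, ← Complex.exp_nat_mul]
  congr 1
  push_cast
  ring

lemma sqrt_cast_mul (n : ℕ) (hn : 0 < n) :
    ((Real.sqrt n : ℂ)) * ((Real.sqrt n : ℂ)) = (n : ℂ) := by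
  have h : Real.sqrt n * Real.sqrt n = (n:ℝ) := Real.mul_self_sqrt (by positivity)
  calc ((Real.sqrt n : ℂ)) * ((Real.sqrt n : ℂ)) = ((Real.sqrt n * Real.sqrt n : ℝ) : ℂ) := by
        push_cast; ring
    _ = (n : ℂ) := by rw [h]; norm_cast

lemma zmod_two_ne_zero (n : ℕ) (hp : n.Prime) (hodd : Odd n) : (2 : ZMod n) ≠ 0 := by
  have : ((2 : ℕ) : ZMod n) ≠ 0 := by
    rw [Ne, ZMod.natCast_eq_zero_iff]
    intro h
    have h2 := (Nat.prime_dvd_prime_iff_eq hp Nat.prime_two).mp h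
    rw [h2, Nat.odd_iff] at hodd
    omega
  simpa using this

lemma gauss_unitary (n : ℕ) [NeZero n] [Fact n.Prime] (hp : n.Prime) (hodd : Odd n) :
    gaussMatrix n * (gaussMatrix n)ᴴ = 1 := by
  have hn1 : 1 < n := hp.one_lt
  have hn0 : (0:ℕ) < n := by omega
  rw [gaussMatrix_eq]
  ext i k
  simp only [Matrix.mul_apply, Matrix.conjTranspose_apply, circ, Matrix.one_apply]
  have hconst : (starRingEnd ℂ) (1 / (Real.sqrt n : ℂ)) = 1 / (Real.sqrt n : ℂ) := by
    rw [_root_.map_div₀, _root_.map_one, Complex.conj_ofReal]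
  have hterm : ∀ j : ZMod n,
      (1/(Real.sqrt n:ℂ)) * ee n ((j-i)^2) * star ((1/(Real.sqrt n:ℂ)) * ee n ((j-k)^2))
      = (1/(n:ℂ)) * (ee n (i^2 - k^2) * ee n ((2*(k-i)) * j)) := by
    intro j
    rw [star_mul']; simp only [Complex.star_def]; rw [hconst, conj_ee]
    have h1 : (j-i)^2 + -((j-k)^2) = (i^2 - k^2) + (2*(k-i))*j := by ring
    calc (1/(Real.sqrt n:ℂ)) * ee n ((j-i)^2) * ((1/(Real.sqrt n:ℂ)) * ee n (-((j-k)^2)))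
        = ((1/(Real.sqrt n:ℂ)) * (1/(Real.sqrt n:ℂ))) * (ee n ((j-i)^2) * ee n (-((j-k)^2))) := by
          ring
      _ = (1/(n:ℂ)) * ee n ((i^2-k^2) + (2*(k-i))*j) := by
          rw [← ee_add, h1, one_div_mul_one_div, sqrt_cast_mul n hn0]
      _ = (1/(n:ℂ)) * (ee n (i^2-k^2) * ee n ((2*(k-i))*j)) := by rw [ee_add]
  rw [Finset.sum_congr rfl (fun j _ => hterm j), ← Finset.mul_sum, ← Finset.mul_sum]
  by_cases h : i = k
  · subst h
    simp only [sub_self, mul_zero, zero_mul, ee_zero, one_mul, Finset.sum_const,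
      Finset.card_univ, ZMod.card, nsmul_eq_mul, mul_one, if_pos rfl]
    have : (n:ℂ) ≠ 0 := Nat.cast_ne_zero.mpr (by omega)
    field_simp
    simp
  · have hne : (2*(k-i)) ≠ 0 :=
      mul_ne_zero (zmod_two_ne_zero n hp hodd) (sub_ne_zero.mpr (fun hh => h hh.symm))
    rw [sum_ee_mul n hn1 _ hne]
    simp [h]

lemma natCast_ne_zero_zmod (n s : ℕ) [NeZero n] (h1 : 0 < s) (h2 : s < n) :
    ((s : ℕ) : ZMod n) ≠ 0 := by
  rw [Ne, ZMod.natCast_eq_zero_iff]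
  intro hdvd
  have := Nat.le_of_dvd h1 hdvd
  omega

lemma pow_form (n : ℕ) [NeZero n] [Fact n.Prime] (hp : n.Prime) :
    ∀ s : ℕ, 1 ≤ s → s ≤ n - 1 → ∃ c : ℂ,
      (gaussMatrix n) ^ s = circ (fun t => c * ee n (((s : ℕ) : ZMod n)⁻¹ * t ^ 2)) := by
  have hn1 : 1 < n := hp.one_lt
  intro s
  induction s with
  | zero => intro h; omega
  | succ s ih =>
    intro h1 h2
    rcases Nat.eq_zero_or_pos s with hs | hs
    · subst hs
      refine ⟨(1 / Real.sqrt n : ℂ), ?_⟩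
      rw [pow_one, gaussMatrix_eq]
      norm_num
    · -- inductive step
      obtain ⟨c, hc⟩ := ih hs (by omega)
      set a : ZMod n := ((s : ℕ) : ZMod n)⁻¹ with ha_def
      have hs0 : ((s : ℕ) : ZMod n) ≠ 0 := natCast_ne_zero_zmod n s hs (by omega)
      have hs1 : ((s : ℕ) : ZMod n) + 1 ≠ 0 := by
        have hcast : (((s+1 : ℕ)) : ZMod n) = ((s : ℕ) : ZMod n) + 1 := by push_cast; ring
        rw [← hcast]
        exact natCast_ne_zero_zmod n (s+1) (by omega) (by omega)
      have ha0 : a ≠ 0 := inv_ne_zero hs0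
      have hb : a + 1 ≠ 0 := by
        have key : a + 1 = a * (((s : ℕ) : ZMod n) + 1) := by
          rw [mul_add, mul_one, ha_def, inv_mul_cancel₀ hs0, add_comm]
        rw [key]
        exact mul_ne_zero ha0 hs1
      have ha' : a * (a + 1)⁻¹ = (((s + 1 : ℕ)) : ZMod n)⁻¹ := by
        have hcast : (((s+1 : ℕ)) : ZMod n) = ((s : ℕ) : ZMod n) + 1 := by push_cast; ring
        rw [hcast, ha_def]
        field_simp
        rw [add_comm (1 : ZMod n) _]
        exact div_self hs1
      refine ⟨c * (1 / (Real.sqrt n : ℂ)) * (∑ j : ZMod n, ee n ((a + 1) * j ^ 2)), ?_⟩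
      rw [pow_succ, hc, gaussMatrix_eq, circ_mul]
      have key : ∀ t : ZMod n,
          (∑ j : ZMod n, (c * ee n (a * j ^ 2)) * ((1 / (Real.sqrt n : ℂ)) * ee n ((t - j) ^ 2)))
          = (c * (1 / (Real.sqrt n : ℂ)) * (∑ j : ZMod n, ee n ((a + 1) * j ^ 2)))
            * ee n (((s + 1 : ℕ) : ZMod n)⁻¹ * t ^ 2) := by
        intro t
        have hexp : ∀ j : ZMod n, a * j ^ 2 + (t - j) ^ 2
            = (a + 1) * (j - t * (a + 1)⁻¹) ^ 2 + (a * (a + 1)⁻¹) * t ^ 2 := by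
          intro j
          field_simp
          ring
        have h1' : ∀ j : ZMod n,
            (c * ee n (a * j ^ 2)) * ((1 / (Real.sqrt n : ℂ)) * ee n ((t - j) ^ 2))
            = (c * (1 / (Real.sqrt n : ℂ)) * ee n ((a * (a + 1)⁻¹) * t ^ 2))
              * ee n ((a + 1) * (j - t * (a + 1)⁻¹) ^ 2) := by
          intro j
          calc (c * ee n (a * j ^ 2)) * ((1 / (Real.sqrt n : ℂ)) * ee n ((t - j) ^ 2))
              = (c * (1 / (Real.sqrt n : ℂ))) * ee n (a * j ^ 2 + (t - j) ^ 2) := by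
                rw [ee_add]; ring
            _ = (c * (1 / (Real.sqrt n : ℂ)))
                * (ee n ((a + 1) * (j - t * (a + 1)⁻¹) ^ 2) * ee n ((a * (a + 1)⁻¹) * t ^ 2)) := by
                rw [hexp j, ee_add]
            _ = _ := by ring
        calc (∑ j : ZMod n, (c * ee n (a * j ^ 2)) * ((1 / (Real.sqrt n : ℂ)) * ee n ((t - j) ^ 2)))
            = (c * (1 / (Real.sqrt n : ℂ)) * ee n ((a * (a + 1)⁻¹) * t ^ 2))
              * ∑ j : ZMod n, ee n ((a + 1) * (j - t * (a + 1)⁻¹) ^ 2) := by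
              rw [Finset.sum_congr rfl (fun j _ => h1' j), ← Finset.mul_sum]
          _ = (c * (1 / (Real.sqrt n : ℂ)) * ee n ((a * (a + 1)⁻¹) * t ^ 2))
              * ∑ j : ZMod n, ee n ((a + 1) * j ^ 2) := by
              congr 1
              exact Fintype.sum_equiv (Equiv.subRight (t * (a + 1)⁻¹)) _ _ (fun j => rfl)
          _ = _ := by rw [ha']; ring
      ext i k
      exact key (k - i)

lemma pow_unitary (n : ℕ) [NeZero n] [Fact n.Prime] (hp : n.Prime) (hodd : Odd n) (s : ℕ) :
    (gaussMatrix n) ^ s * ((gaussMatrix n) ^ s)ᴴ = 1 := by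
  induction s with
  | zero => simp
  | succ s ih =>
    rw [pow_succ, conjTranspose_mul, mul_assoc, ← mul_assoc (gaussMatrix n),
      gauss_unitary n hp hodd, one_mul, ih]

lemma normSq_c (n : ℕ) [NeZero n] [Fact n.Prime] (hp : n.Prime) (hodd : Odd n)
    (s : ℕ) (c : ℂ)
    (hc : (gaussMatrix n) ^ s = circ (fun t => c * ee n (((s : ℕ) : ZMod n)⁻¹ * t ^ 2))) :
    Complex.normSq c = 1 / n := by
  have hU := pow_unitary n hp hodd s
  have h00 : ((gaussMatrix n) ^ s * ((gaussMatrix n) ^ s)ᴴ) 0 0 = 1 := by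
    rw [hU]; simp
  rw [Matrix.mul_apply] at h00
  simp only [Matrix.conjTranspose_apply, hc] at h00
  have hterm : ∀ t : ZMod n,
      circ (fun t => c * ee n (((s : ℕ) : ZMod n)⁻¹ * t ^ 2)) 0 t
        * star (circ (fun t => c * ee n (((s : ℕ) : ZMod n)⁻¹ * t ^ 2)) 0 t)
      = ((Complex.normSq c : ℝ) : ℂ) := by
    intro t
    rw [show ∀ z : ℂ, star z = (starRingEnd ℂ) z from fun _ => rfl]
    rw [Complex.mul_conj]
    norm_cast
    show Complex.normSq (c * ee n _) = _
    rw [_root_.map_mul, Complex.normSq_eq_norm_sq (ee n _), abs_ee, one_pow, mul_one]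
  rw [Finset.sum_congr rfl (fun t _ => hterm t)] at h00
  rw [Finset.sum_const, Finset.card_univ, ZMod.card, nsmul_eq_mul] at h00
  have hn0 : (n:ℂ) ≠ 0 := Nat.cast_ne_zero.mpr (NeZero.ne n)
  have : ((Complex.normSq c : ℝ) : ℂ) = ((1/n : ℝ) : ℂ) := by
    push_cast
    field_simp at h00 ⊢
    linear_combination h00
  exact_mod_cast this

theorem gaussMatrix_pow_diag (n : ℕ) [NeZero n] (hp : n.Prime) (hodd : Odd n) :
    (∀ s : ℕ, 0 < s → s < n →
      ‖((gaussMatrix n) ^ s) 0 0‖ ^ 2 ≤ 1 / n) ∧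
    (∃ y₀ : ℂ, ‖y₀‖ ^ 2 = 1 ∧
      (gaussMatrix n) ^ n = circ (fun t => if t = 0 then y₀ else 0)) := by
  haveI : Fact n.Prime := ⟨hp⟩
  have hn1 : 1 < n := hp.one_lt
  have hn0 : 0 < n := by omega
  have hn3 : 3 ≤ n := by
    have h2 := hp.two_le
    rw [Nat.odd_iff] at hodd
    omega
  have hsqrt0 : ((Real.sqrt n : ℝ) : ℂ) ≠ 0 := by
    have h : (0:ℝ) < Real.sqrt n := Real.sqrt_pos.mpr (by positivity)
    exact Complex.ofReal_ne_zero.mpr h.ne'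
  constructor
  · intro s hs1 hs2
    obtain ⟨c, hc⟩ := pow_form n hp s hs1 (by omega)
    have hns := normSq_c n hp hodd s c hc
    have hdiag : ((gaussMatrix n) ^ s) 0 0 = c := by
      rw [hc]
      show c * ee n (((s : ℕ) : ZMod n)⁻¹ * ((0 : ZMod n) - 0) ^ 2) = c
      simp [ee_zero]
    rw [hdiag, Complex.sq_norm, hns]
  · obtain ⟨c, hc⟩ := pow_form n hp (n - 1) (by omega) (le_refl _)
    have hns := normSq_c n hp hodd (n - 1) c hc
    have hm1 : (((n - 1 : ℕ)) : ZMod n) = -1 := by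
      rw [Nat.cast_sub (by omega : 1 ≤ n), ZMod.natCast_self, Nat.cast_one, zero_sub]
    have hinv : ((-1 : ZMod n))⁻¹ = -1 := by
      rw [inv_neg, inv_one]
    rw [hm1, hinv] at hc
    refine ⟨c * ((Real.sqrt n : ℝ) : ℂ), ?_, ?_⟩
    · rw [norm_mul, mul_pow, Complex.sq_norm c, hns, Complex.norm_real, Real.norm_eq_abs,
        _root_.abs_of_nonneg (Real.sqrt_nonneg _)]
      have hsq : (Real.sqrt n) ^ 2 = (n : ℝ) := Real.sq_sqrt (by positivity)
      rw [hsq]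
      field_simp
    · have hpow : (gaussMatrix n) ^ n = (gaussMatrix n) ^ (n - 1) * gaussMatrix n := by
        rw [← pow_succ, Nat.sub_add_cancel (by omega : 1 ≤ n)]
      rw [hpow, hc, gaussMatrix_eq, circ_mul]
      have key : ∀ t : ZMod n,
          (∑ j : ZMod n, (c * ee n (-1 * j ^ 2)) * ((1 / (Real.sqrt n : ℂ)) * ee n ((t - j) ^ 2)))
          = if t = 0 then c * ((Real.sqrt n : ℝ) : ℂ) else 0 := by
        intro t
        have h1 : ∀ j : ZMod n,
            (c * ee n (-1 * j ^ 2)) * ((1 / (Real.sqrt n : ℂ)) * ee n ((t - j) ^ 2))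
            = (c * (1 / (Real.sqrt n : ℂ)) * ee n (t ^ 2)) * ee n ((-(2 * t)) * j) := by
          intro j
          have hx : -1 * j ^ 2 + (t - j) ^ 2 = t ^ 2 + (-(2 * t)) * j := by ring
          calc (c * ee n (-1 * j ^ 2)) * ((1 / (Real.sqrt n : ℂ)) * ee n ((t - j) ^ 2))
              = (c * (1 / (Real.sqrt n : ℂ))) * ee n (-1 * j ^ 2 + (t - j) ^ 2) := by
                rw [ee_add]; ring
            _ = _ := by rw [hx, ee_add]; ring
        rw [Finset.sum_congr rfl (fun j _ => h1 j), ← Finset.mul_sum]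
        by_cases ht : t = 0
        · subst ht
          simp only [mul_zero, neg_zero, zero_mul, ee_zero, mul_one, Finset.sum_const,
            Finset.card_univ, ZMod.card, nsmul_eq_mul, if_pos rfl, eq_self_iff_true, if_true]
          have h2 : (1 / ((Real.sqrt n : ℝ) : ℂ)) * (n : ℂ) = ((Real.sqrt n : ℝ) : ℂ) := by
            rw [← sqrt_cast_mul n hn0, one_div, inv_mul_cancel_left₀ hsqrt0]
          calc c * (1 / ((Real.sqrt n : ℝ) : ℂ)) * ee n (0 ^ 2) * (n : ℂ)
              = c * ((1 / ((Real.sqrt n : ℝ) : ℂ)) * (n : ℂ)) := by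
                rw [show ((0 : ZMod n)) ^ 2 = 0 by ring, ee_zero]; ring
            _ = _ := by rw [h2]
        · have hne : (-(2 * t)) ≠ 0 := by
            rw [neg_ne_zero]
            exact mul_ne_zero (zmod_two_ne_zero n hp hodd) ht
          rw [sum_ee_mul n hn1 _ hne, mul_zero, if_neg ht]
      ext i k
      exact key (k - i)
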